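/- The left dual A^* is a right A-module with action A^* ⊗ A ⟶ A^* given by the composite (eval_A ⊗ id_{A^*}) ∘ (id_{A^*} ⊗ m ⊗ id_{A^*}) ∘ (id_{A^*} ⊗ id_A ⊗ coev_A), with associators inserted as needed. For every right A-module M and every object X of C there is a bijection, natural in X and natural in M with respect to morphisms of right A-modules, between the set of right A-module morphisms X ⊗ M ⟶ A^* and the set Hom_C(X, M^*); in other words, M^* is an internal Hom object iHom_A(M, A^*) for the category of right A-modules. -/

import Mathlib

/-!
Let `C` be a rigid monoidal category and `A` a monoid object in `C`.  The dual `Aᘁ`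
is a right `A`-module via
`(eval_A ⊗ id) ∘ (id ⊗ m ⊗ id) ∘ (id ⊗ id ⊗ coev_A) : Aᘁ ⊗ A ⟶ Aᘁ`,
and for every right `A`-module `M` and every `X : C` there is a bijection, natural
in `X` and (contravariantly) in `M`, between right `A`-module morphisms
`X ⊗ M ⟶ Aᘁ` and `Hom(X, Mᘁ)`; that is, `Mᘁ` is an internal Hom object
`iHom_A(M, Aᘁ)`.

(Mathlib's right dual `Xᘁ`, with `ε_ X Xᘁ : Xᘁ ⊗ X ⟶ 𝟙` and
`η_ X Xᘁ : 𝟙 ⟶ X ⊗ Xᘁ`, plays the role of the paper's left dual `X^*`.)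
-/

open CategoryTheory MonoidalCategory

variable {C : Type*} [Category C] [MonoidalCategory C]

/-- A right module over a monoid object `A` in `C`. -/
structure RightMod (A : Mon C) where
  X : C
  act : X ⊗ A.X ⟶ X
  assoc : (act ▷ A.X) ≫ act = (α_ X A.X A.X).hom ≫ (X ◁ A.mon.mul) ≫ act
  unit : (X ◁ A.mon.one) ≫ act = (ρ_ X).hom

/-- A morphism of right `A`-modules. -/
def IsRightModHom {A : Mon C} (M N : RightMod A) (f : M.X ⟶ N.X) : Prop :=
  (f ▷ A.X) ≫ N.act = M.act ≫ f

section

variable [RigidCategory C] (A : Mon C)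

/-- The right `A`-action on `Aᘁ`:
`(eval_A ⊗ id) ∘ (id ⊗ m ⊗ id) ∘ (id ⊗ id ⊗ coev_A)`. -/
noncomputable def dualAction : A.Xᘁ ⊗ A.X ⟶ A.Xᘁ :=
  (ρ_ (A.Xᘁ ⊗ A.X)).inv ≫ ((A.Xᘁ ⊗ A.X) ◁ η_ A.X (A.Xᘁ)) ≫
    (α_ (A.Xᘁ) A.X (A.X ⊗ A.Xᘁ)).hom ≫ (A.Xᘁ ◁ (α_ A.X A.X (A.Xᘁ)).inv) ≫
    (A.Xᘁ ◁ (A.mon.mul ▷ A.Xᘁ)) ≫ (α_ (A.Xᘁ) A.X (A.Xᘁ)).inv ≫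
    (ε_ A.X (A.Xᘁ) ▷ A.Xᘁ) ≫ (λ_ (A.Xᘁ)).hom

/-- `f : X ⊗ M ⟶ Aᘁ` is a morphism of right `A`-modules, where `X ⊗ M` carries the
action `(α) ≫ (X ◁ act_M)` and `Aᘁ` carries the action `dualAction A`. -/
noncomputable def IsModHomToDual (X : C) (M : RightMod A) (f : X ⊗ M.X ⟶ A.Xᘁ) : Prop :=
  (f ▷ A.X) ≫ dualAction A = (α_ X M.X A.X).hom ≫ (X ◁ M.act) ≫ f

set_option linter.unusedSectionVars false

/- ## auxiliary material -/

noncomputable def pe (W Y : C) [HasRightDual Y] : (W ⊗ Y ⟶ 𝟙_ C) ≃ (W ⟶ Yᘁ) :=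
  (tensorRightHomEquiv W Y (Yᘁ) (𝟙_ C)).trans (Iso.homCongr (Iso.refl W) (λ_ (Yᘁ)))

lemma pe_symm_apply {W Y : C} [HasRightDual Y] (f : W ⟶ Yᘁ) :
    (pe W Y).symm f = (f ▷ Y) ≫ ε_ Y (Yᘁ) := by
  dsimp [pe, tensorRightHomEquiv, Iso.homCongr]
  simp only [Category.id_comp, comp_whiskerRight, Category.assoc]
  monoidal

lemma pe_nat {W W' Y : C} [HasRightDual Y] (t : W' ⟶ W) (k : W ⊗ Y ⟶ 𝟙_ C) :
    pe W' Y ((t ▷ Y) ≫ k) = t ≫ pe W Y k := by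
  apply (pe W' Y).symm.injective
  rw [Equiv.symm_apply_apply, pe_symm_apply, comp_whiskerRight, Category.assoc,
    ← pe_symm_apply, Equiv.symm_apply_apply]

/-- Evaluation of `Aᘁ` at the unit. -/
noncomputable def uA : A.Xᘁ ⟶ 𝟙_ C :=
  (ρ_ (A.Xᘁ)).inv ≫ (A.Xᘁ ◁ A.mon.one) ≫ ε_ A.X (A.Xᘁ)

lemma comp_uA {W : C} (h : W ⟶ A.Xᘁ) :
    h ≫ uA A = (ρ_ W).inv ≫ (W ◁ A.mon.one) ≫ (h ▷ A.X) ≫ ε_ A.X (A.Xᘁ) := by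
  dsimp [uA]
  rw [whisker_exchange_assoc, ← rightUnitor_inv_naturality_assoc]

lemma dualAction_eq : dualAction A = pe (A.Xᘁ ⊗ A.X) A.X
    ((α_ (A.Xᘁ) A.X A.X).hom ≫ (A.Xᘁ ◁ A.mon.mul) ≫ ε_ A.X (A.Xᘁ)) := by
  dsimp [dualAction, pe, tensorRightHomEquiv, Iso.homCongr]
  simp only [Category.id_comp, comp_whiskerRight, Category.assoc]
  monoidal

lemma uncurry_dualAction : (dualAction A ▷ A.X) ≫ ε_ A.X (A.Xᘁ) =
    (α_ (A.Xᘁ) A.X A.X).hom ≫ (A.Xᘁ ◁ A.mon.mul) ≫ ε_ A.X (A.Xᘁ) := by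
  rw [← pe_symm_apply, dualAction_eq, Equiv.symm_apply_apply]

lemma uncurry_whisker_dualAction {W : C} (h : W ⟶ A.Xᘁ) :
    (((h ▷ A.X) ≫ dualAction A) ▷ A.X) ≫ ε_ A.X (A.Xᘁ) =
      (α_ W A.X A.X).hom ≫ (W ◁ A.mon.mul) ≫ (h ▷ A.X) ≫ ε_ A.X (A.Xᘁ) := by
  rw [comp_whiskerRight, Category.assoc, uncurry_dualAction,
    associator_naturality_left_assoc, ← whisker_exchange_assoc]

lemma dualAction_comp_uA : dualAction A ≫ uA A = ε_ A.X (A.Xᘁ) := by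
  rw [comp_uA, uncurry_dualAction, associator_naturality_right_assoc,
    ← MonoidalCategory.whiskerLeft_comp_assoc, MonObj.mul_one A.X]
  monoidal

lemma dualAction_assoc :
    ((dualAction A ▷ A.X) ≫ dualAction A) ▷ A.X ≫ ε_ A.X (A.Xᘁ) =
      (((α_ (A.Xᘁ) A.X A.X).hom ≫ (A.Xᘁ ◁ A.mon.mul) ≫ dualAction A) ▷ A.X) ≫ ε_ A.X (A.Xᘁ) := by
  rw [uncurry_whisker_dualAction, uncurry_dualAction]
  -- LHS: α ≫ ◁m ≫ α ≫ ◁m ≫ ε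
  rw [associator_naturality_right_assoc, ← MonoidalCategory.whiskerLeft_comp_assoc]
  -- RHS
  simp only [comp_whiskerRight, Category.assoc]
  rw [uncurry_dualAction, associator_naturality_middle_assoc, ← MonoidalCategory.whiskerLeft_comp_assoc,
    MonObj.mul_assoc A.X]
  simp only [MonoidalCategory.whiskerLeft_comp, Category.assoc]
  monoidal

/-- The underlying map of the bijection. -/
noncomputable def efun (X : C) (M : RightMod A) (g : X ⟶ M.Xᘁ) : X ⊗ M.X ⟶ A.Xᘁ :=
  pe (X ⊗ M.X) A.X
    ((α_ X M.X A.X).hom ≫ (X ◁ M.act) ≫ (g ▷ M.X) ≫ ε_ M.X (M.Xᘁ))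

lemma efun_uncurry (X : C) (M : RightMod A) (g : X ⟶ M.Xᘁ) :
    (efun A X M g ▷ A.X) ≫ ε_ A.X (A.Xᘁ) =
      (α_ X M.X A.X).hom ≫ (X ◁ M.act) ≫ (g ▷ M.X) ≫ ε_ M.X (M.Xᘁ) := by
  rw [← pe_symm_apply, efun, Equiv.symm_apply_apply]

lemma efun_modhom (X : C) (M : RightMod A) (g : X ⟶ M.Xᘁ) :
    IsModHomToDual A X M (efun A X M g) := by
  unfold IsModHomToDual
  apply (pe ((X ⊗ M.X) ⊗ A.X) A.X).symm.injective
  rw [pe_symm_apply, pe_symm_apply, uncurry_whisker_dualAction, efun_uncurry,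
    associator_naturality_right_assoc, ← MonoidalCategory.whiskerLeft_comp_assoc]
  have hM : M.X ◁ A.mon.mul ≫ M.act = (α_ M.X A.X A.X).inv ≫ (M.act ▷ A.X) ≫ M.act := by
    rw [M.assoc]; simp
  rw [hM]
  simp only [MonoidalCategory.whiskerLeft_comp, Category.assoc, comp_whiskerRight]
  rw [efun_uncurry, associator_naturality_middle_assoc]
  monoidal

lemma efun_left (X : C) (M : RightMod A) (g : X ⟶ M.Xᘁ) :
    pe X M.X (efun A X M g ≫ uA A) = g := by
  rw [comp_uA, efun_uncurry, associator_naturality_right_assoc, ← MonoidalCategory.whiskerLeft_comp_assoc,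
    M.unit]
  have h1 : (ρ_ (X ⊗ M.X)).inv ≫ (α_ X M.X (𝟙_ C)).hom ≫ X ◁ (ρ_ M.X).hom ≫
      g ▷ M.X ≫ ε_ M.X (M.Xᘁ) = (g ▷ M.X) ≫ ε_ M.X (M.Xᘁ) := by monoidal
  rw [h1, ← pe_symm_apply, Equiv.apply_symm_apply]

lemma efun_right (X : C) (M : RightMod A) (f : X ⊗ M.X ⟶ A.Xᘁ)
    (hf : IsModHomToDual A X M f) :
    efun A X M (pe X M.X (f ≫ uA A)) = f := by
  apply (pe (X ⊗ M.X) A.X).symm.injective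
  rw [pe_symm_apply, pe_symm_apply, efun_uncurry, ← pe_symm_apply, Equiv.symm_apply_apply]
  rw [← Category.assoc (X ◁ M.act), ← Category.assoc, ← hf]
  simp only [Category.assoc]
  rw [dualAction_comp_uA]

noncomputable def eEquiv (X : C) (M : RightMod A) :
    (X ⟶ M.Xᘁ) ≃ { f : X ⊗ M.X ⟶ A.Xᘁ // IsModHomToDual A X M f } where
  toFun g := ⟨efun A X M g, efun_modhom A X M g⟩
  invFun f := pe X M.X (f.1 ≫ uA A)
  left_inv g := efun_left A X M g
  right_inv f := Subtype.ext (efun_right A X M f.1 f.2)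

lemma efun_nat_left (X X' : C) (t : X' ⟶ X) (M : RightMod A) (g : X ⟶ M.Xᘁ) :
    efun A X' M (t ≫ g) = (t ▷ M.X) ≫ efun A X M g := by
  unfold efun
  rw [comp_whiskerRight, Category.assoc, whisker_exchange_assoc,
    ← associator_naturality_left_assoc, pe_nat]

lemma efun_nat_right (X : C) (M M' : RightMod A) (h : M'.X ⟶ M.X)
    (hm : IsRightModHom M' M h) (g : X ⟶ M.Xᘁ) :
    efun A X M' (g ≫ hᘁ) = (X ◁ h) ≫ efun A X M g := by
  unfold efun
  rw [comp_whiskerRight, Category.assoc, rightAdjointMate_comp_evaluation,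
    ← whisker_exchange_assoc, ← MonoidalCategory.whiskerLeft_comp_assoc, ← hm]
  simp only [MonoidalCategory.whiskerLeft_comp, Category.assoc]
  rw [← associator_naturality_middle_assoc, pe_nat]

/-- `Aᘁ` is a right `A`-module via `dualAction`, and `Mᘁ` is an internal Hom object
`iHom_A(M, Aᘁ)`: there is a bijection, natural in `X` and natural (contravariantly,
via right adjoint mates) in `M` with respect to module morphisms, between
`Hom(X, Mᘁ)` and the right `A`-module morphisms `X ⊗ M ⟶ Aᘁ`. -/
theorem dual_is_module_and_internal_hom :
    ((dualAction A ▷ A.X) ≫ dualAction A =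
      (α_ (A.Xᘁ) A.X A.X).hom ≫ (A.Xᘁ ◁ A.mon.mul) ≫ dualAction A) ∧
    ((A.Xᘁ ◁ A.mon.one) ≫ dualAction A = (ρ_ (A.Xᘁ)).hom) ∧
    ∃ e : ∀ (X : C) (M : RightMod A),
        (X ⟶ M.Xᘁ) ≃ { f : X ⊗ M.X ⟶ A.Xᘁ // IsModHomToDual A X M f },
      (∀ (X X' : C) (t : X' ⟶ X) (M : RightMod A) (g : X ⟶ M.Xᘁ),
        ((e X' M (t ≫ g)).1 : X' ⊗ M.X ⟶ A.Xᘁ) = (t ▷ M.X) ≫ (e X M g).1) ∧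
      (∀ (X : C) (M M' : RightMod A) (h : M'.X ⟶ M.X), IsRightModHom M' M h →
        ∀ g : X ⟶ M.Xᘁ,
          ((e X M' (g ≫ hᘁ)).1 : X ⊗ M'.X ⟶ A.Xᘁ) = (X ◁ h) ≫ (e X M g).1) := by
  refine ⟨?_, ?_, eEquiv A, ?_, ?_⟩
  · apply (pe ((A.Xᘁ ⊗ A.X) ⊗ A.X) A.X).symm.injective
    rw [pe_symm_apply, pe_symm_apply]
    exact dualAction_assoc A
  · apply (pe (A.Xᘁ ⊗ 𝟙_ C) A.X).symm.injective
    rw [pe_symm_apply, pe_symm_apply, comp_whiskerRight, Category.assoc, uncurry_dualAction,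
      associator_naturality_middle_assoc, ← MonoidalCategory.whiskerLeft_comp_assoc, MonObj.one_mul A.X]
    monoidal
  · intro X X' t M g
    exact efun_nat_left A X X' t M g
  · intro X M M' h hm g
    exact efun_nat_right A X M M' h hm g

end
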